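/- Let A be a C*-algebra and Φ : A → ℂ a continuous hermitian linear functional (Φ(x*) = conj(Φ(x)) for all x). Let m ≥ 2 and P(x) = Φ(x^m). Then ‖P‖ = ‖Φ‖, where ‖P‖ = sup{|P(x)| : ‖x‖ ≤ 1}. -/

import Mathlib

open Complex in
lemma aux_mth_root {A : Type*} [CStarAlgebra A] {h : A} (hsa : IsSelfAdjoint h)
    (hn : ‖h‖ ≤ 1) (m : ℕ) (hm : 2 ≤ m) :
    ∃ x : A, ‖x‖ ≤ 1 ∧ x ^ m = h := by
  rcases subsingleton_or_nontrivial A with hA | hA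
  · exact ⟨0, by simp, Subsingleton.elim _ _⟩
  have hm0 : (m : ℝ) ≠ 0 := by positivity
  have hm0' : (m : ℂ) ≠ 0 := by exact_mod_cast Nat.cast_ne_zero.mpr (by omega)
  have hmpos : (0:ℝ) < 1 / m := by positivity
  have hinv : ((m:ℝ))⁻¹ ≠ 0 := inv_ne_zero hm0
  set ω : ℂ := Complex.exp (Real.pi * Complex.I / m) with hω
  have hωm : ω ^ m = -1 := by
    rw [hω, ← Complex.exp_nat_mul,
      show (m : ℂ) * (Real.pi * Complex.I / m) = Real.pi * Complex.I by
        field_simp]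
    exact Complex.exp_pi_mul_I
  have hωn : ‖ω‖ = 1 := by
    simp [hω, Complex.norm_exp]
  set g : ℝ → ℂ := fun t => ((max t 0) ^ (1/(m:ℝ)) : ℝ) + ω * ((max (-t) 0) ^ (1/(m:ℝ)) : ℝ) with hg
  have hgc : Continuous g := by
    fun_prop (disch := positivity)
  set f : ℂ → ℂ := fun z => g z.re with hf
  have hfc : Continuous f := hgc.comp Complex.continuous_re
  have hnormal : IsStarNormal h := hsa.isStarNormal
  have key : ∀ z ∈ spectrum ℂ h, (f z) ^ m = z := by
    intro z hz
    have hzre : z = z.re := hsa.mem_spectrum_eq_re hz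
    set t : ℝ := z.re
    rcases le_or_gt 0 t with ht | ht
    · have h1 : max t 0 = t := max_eq_left ht
      have h2 : max (-t) 0 = 0 := max_eq_right (by linarith)
      have : f z = ((t ^ (1/(m:ℝ)) : ℝ) : ℂ) := by
        simp [hf, hg, show z.re = t from rfl, h1, h2, Real.zero_rpow hinv]
      rw [this, ← Complex.ofReal_pow, ← Real.rpow_natCast (t ^ (1/(m:ℝ))) m,
        ← Real.rpow_mul ht]
      rw [one_div, inv_mul_cancel₀ hm0, Real.rpow_one]
      exact hzre.symm
    · have h1 : max t 0 = 0 := max_eq_right ht.le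
      have h2 : max (-t) 0 = -t := max_eq_left (by linarith)
      have : f z = ω * (((-t) ^ (1/(m:ℝ)) : ℝ) : ℂ) := by
        simp [hf, hg, show z.re = t from rfl, h1, h2, Real.zero_rpow hinv]
      rw [this, mul_pow, hωm, ← Complex.ofReal_pow,
        ← Real.rpow_natCast ((-t) ^ (1/(m:ℝ))) m, ← Real.rpow_mul (by linarith)]
      rw [one_div, inv_mul_cancel₀ hm0, Real.rpow_one]
      push_cast
      rw [hzre]; ring
  refine ⟨cfc f h, ?_, ?_⟩
  · apply norm_cfc_le zero_le_one
    intro z hz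
    have hzre : z = z.re := hsa.mem_spectrum_eq_re hz
    have hzn : ‖z‖ ≤ 1 := (spectrum.norm_le_norm_of_mem hz).trans hn
    have htabs : |z.re| ≤ 1 := by
      calc |z.re| ≤ ‖z‖ := Complex.abs_re_le_norm z
        _ ≤ 1 := hzn
    set t : ℝ := z.re
    rcases le_or_gt 0 t with ht | ht
    · have h1 : max t 0 = t := max_eq_left ht
      have h2 : max (-t) 0 = 0 := max_eq_right (by linarith)
      have : f z = ((t ^ (1/(m:ℝ)) : ℝ) : ℂ) := by
        simp [hf, hg, show z.re = t from rfl, h1, h2, Real.zero_rpow hinv]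
      rw [this, Complex.norm_real, Real.norm_eq_abs,
        _root_.abs_of_nonneg (Real.rpow_nonneg ht _)]
      calc t ^ (1/(m:ℝ)) ≤ 1 ^ (1/(m:ℝ)) :=
            Real.rpow_le_rpow ht (by rw [_root_.abs_of_nonneg ht] at htabs; exact htabs) hmpos.le
        _ = 1 := Real.one_rpow _
    · have h1 : max t 0 = 0 := max_eq_right ht.le
      have h2 : max (-t) 0 = -t := max_eq_left (by linarith)
      have : f z = ω * (((-t) ^ (1/(m:ℝ)) : ℝ) : ℂ) := by
        simp [hf, hg, show z.re = t from rfl, h1, h2, Real.zero_rpow hinv]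
      rw [this, norm_mul, hωn, one_mul, Complex.norm_real, Real.norm_eq_abs,
        _root_.abs_of_nonneg (Real.rpow_nonneg (by linarith) _)]
      calc (-t) ^ (1/(m:ℝ)) ≤ 1 ^ (1/(m:ℝ)) :=
            Real.rpow_le_rpow (by linarith)
              (by rw [abs_of_neg ht] at htabs; exact htabs) hmpos.le
        _ = 1 := Real.one_rpow _
  · rw [← cfc_pow f m h (hfc.continuousOn)]
    rw [cfc_congr (g := id) key]
    exact cfc_id ℂ h

lemma aux_herm {A : Type*} [CStarAlgebra A]
    (Φ : A →L[ℂ] ℂ) (hherm : ∀ x : A, Φ (star x) = starRingEnd ℂ (Φ x))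
    {y : A} (hy : ‖y‖ ≤ 1) :
    ∃ h : A, IsSelfAdjoint h ∧ ‖h‖ ≤ 1 ∧ ‖Φ y‖ = ‖Φ h‖ := by
  obtain ⟨c, hc1, hc2⟩ : ∃ c : ℂ, ‖c‖ = 1 ∧ c * Φ y = (‖Φ y‖ : ℂ) := by
    by_cases h0 : Φ y = 0
    · exact ⟨1, by simp, by simp [h0]⟩
    · refine ⟨(‖Φ y‖ : ℂ) / Φ y, ?_, ?_⟩
      · rw [norm_div, Complex.norm_real, Real.norm_eq_abs,
          _root_.abs_of_nonneg (norm_nonneg _), div_self (norm_ne_zero_iff.mpr h0)]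
      · rw [div_mul_cancel₀ _ h0]
  refine ⟨(2:ℂ)⁻¹ • (c • y + star (c • y)), ?_, ?_, ?_⟩
  · rw [IsSelfAdjoint, star_smul, star_add, star_star]
    rw [show star ((2:ℂ)⁻¹) = (2:ℂ)⁻¹ by simp [Complex.star_def]]
    rw [add_comm]
  · calc ‖(2:ℂ)⁻¹ • (c • y + star (c • y))‖
        ≤ ‖(2:ℂ)⁻¹‖ * (‖c • y‖ + ‖star (c • y)‖) := by
          rw [norm_smul]
          gcongr
          exact norm_add_le _ _
      _ = 2⁻¹ * (‖y‖ + ‖y‖) := by rw [norm_star, norm_smul, hc1, one_mul]; norm_num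
      _ ≤ 2⁻¹ * (1 + 1) := by gcongr
      _ = 1 := by norm_num
  · have : Φ ((2:ℂ)⁻¹ • (c • y + star (c • y))) = (‖Φ y‖ : ℂ) := by
      simp only [map_smul, map_add, hherm, map_smul, smul_eq_mul, hc2,
        Complex.conj_ofReal]
      ring
    rw [this, Complex.norm_real, Real.norm_eq_abs, _root_.abs_of_nonneg (norm_nonneg _)]

/-- For a continuous hermitian linear functional `Φ` on a C*-algebra and `m ≥ 2`,
the norm of the polynomial `x ↦ Φ (x^m)` over the closed unit ball equals `‖Φ‖`. -/
theorem stmt_12 {A : Type*} [CStarAlgebra A]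
    (Φ : A →L[ℂ] ℂ) (hherm : ∀ x : A, Φ (star x) = starRingEnd ℂ (Φ x))
    (m : ℕ) (hm : 2 ≤ m) :
    sSup {r : ℝ | ∃ x : A, ‖x‖ ≤ 1 ∧ r = ‖Φ (x ^ m)‖} = ‖Φ‖ := by
  set S := {r : ℝ | ∃ x : A, ‖x‖ ≤ 1 ∧ r = ‖Φ (x ^ m)‖} with hS
  have h0S : (0:ℝ) ∈ S := ⟨0, by simp, by simp [zero_pow (by omega : m ≠ 0)]⟩
  have hub : ∀ r ∈ S, r ≤ ‖Φ‖ := by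
    rintro r ⟨x, hx, rfl⟩
    calc ‖Φ (x ^ m)‖ ≤ ‖Φ‖ * ‖x ^ m‖ := Φ.le_opNorm _
      _ ≤ ‖Φ‖ * 1 := by
          gcongr
          calc ‖x ^ m‖ ≤ ‖x‖ ^ m := norm_pow_le' x (by omega)
            _ ≤ 1 := pow_le_one₀ (norm_nonneg x) hx
      _ = ‖Φ‖ := mul_one _
  have hbdd : BddAbove S := ⟨‖Φ‖, hub⟩
  have hkey : ∀ y : A, ‖y‖ ≤ 1 → ‖Φ y‖ ≤ sSup S := by
    intro y hy
    obtain ⟨h, hsa, hn, heq⟩ := aux_herm Φ hherm hy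
    obtain ⟨x, hx1, hxm⟩ := aux_mth_root hsa hn m hm
    rw [heq, ← hxm]
    exact le_csSup hbdd ⟨x, hx1, rfl⟩
  refine le_antisymm (csSup_le ⟨0, h0S⟩ hub) ?_
  refine Φ.opNorm_le_bound (le_csSup hbdd h0S) ?_
  intro y
  by_cases hy0 : y = 0
  · simp [hy0]
  · have hyn : (0:ℝ) < ‖y‖ := norm_pos_iff.mpr hy0
    have hu : ‖(‖y‖ : ℂ)⁻¹ • y‖ ≤ 1 := by
      rw [norm_smul, norm_inv, Complex.norm_real, Real.norm_eq_abs,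
        _root_.abs_of_nonneg (norm_nonneg y), inv_mul_cancel₀ hyn.ne']
    have := hkey _ hu
    rw [map_smul, norm_smul, norm_inv, Complex.norm_real, Real.norm_eq_abs,
      _root_.abs_of_nonneg (norm_nonneg y)] at this
    calc ‖Φ y‖ = ‖y‖ * (‖y‖⁻¹ * ‖Φ y‖) := by field_simp
      _ ≤ ‖y‖ * sSup S := by gcongr
      _ = sSup S * ‖y‖ := mul_comm _ _
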